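/- For every uncountable cardinal κ and every p ∈ D(2), the space Σ(D(2),p,κ) is OHD and is not WSHD. -/
import Mathlib

open Filter Topology Set

/-- `x : ℕ → X` has no convergent subsequence. -/
def NoConvSubseq {X : Type*} [TopologicalSpace X] (x : ℕ → X) : Prop :=
  ∀ φ : ℕ → ℕ, StrictMono φ → ∀ y : X, ¬ Filter.Tendsto (x ∘ φ) Filter.atTop (nhds y)

/-- Selectively highly divergent. -/
def SHD (X : Type*) [TopologicalSpace X] : Prop :=
  ∀ U : ℕ → Set X, (∀ n, IsOpen (U n)) → (∀ n, (U n).Nonempty) →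
    ∃ x : ℕ → X, (∀ n, x n ∈ U n) ∧ NoConvSubseq x

/-- Weakly selectively highly divergent. -/
def WSHD (X : Type*) [TopologicalSpace X] : Prop :=
  ∀ U : ℕ → Set X, (∀ n, IsOpen (U n)) → (∀ n, (U n).Nonempty) →
    ∃ A : Set ℕ, A.Infinite ∧ ∃ x : ℕ → X, (∀ n ∈ A, x n ∈ U n) ∧
      ∀ φ : ℕ → ℕ, StrictMono φ → (∀ n, φ n ∈ A) →
        ∀ y : X, ¬ Filter.Tendsto (x ∘ φ) Filter.atTop (nhds y)

/-- A sequence of nonempty open sets converges to a point. -/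
def OpenSeqTendsto {X : Type*} [TopologicalSpace X] (U : ℕ → Set X) (x : X) : Prop :=
  ∀ V : Set X, IsOpen V → x ∈ V → ∃ m : ℕ, ∀ n ≥ m, U n ⊆ V

/-- Openly highly divergent: no sequence of nonempty open sets converges to a point. -/
def OHD (X : Type*) [TopologicalSpace X] : Prop :=
  ¬ ∃ (U : ℕ → Set X) (x : X),
      (∀ n, IsOpen (U n)) ∧ (∀ n, (U n).Nonempty) ∧ OpenSeqTendsto U x

/-- `x` has a countable local (neighbourhood) base. -/
def HasCountableLocalBase {X : Type*} [TopologicalSpace X] (x : X) : Prop :=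
  ∃ B : Set (Set X), B.Countable ∧ (∀ V ∈ B, IsOpen V ∧ x ∈ V) ∧
    ∀ U : Set X, IsOpen U → x ∈ U → ∃ V ∈ B, V ⊆ U

/-- `x` has a countable local π-base. -/
def HasCountableLocalPiBase {X : Type*} [TopologicalSpace X] (x : X) : Prop :=
  ∃ B : Set (Set X), B.Countable ∧ (∀ V ∈ B, IsOpen V ∧ V.Nonempty) ∧
    ∀ U : Set X, IsOpen U → x ∈ U → ∃ V ∈ B, V ⊆ U

/-- UC: every point has uncountable character. -/
def UC (X : Type*) [TopologicalSpace X] : Prop := ∀ x : X, ¬ HasCountableLocalBase x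

/-- π-UC: every point has uncountable π-character. -/
def PiUC (X : Type*) [TopologicalSpace X] : Prop := ∀ x : X, ¬ HasCountableLocalPiBase x

/-- Sequentially discrete: every convergent sequence is eventually constant. -/
def SD (X : Type*) [TopologicalSpace X] : Prop :=
  ∀ (x : ℕ → X) (y : X), Filter.Tendsto x Filter.atTop (nhds y) →
    ∃ m : ℕ, ∀ n ≥ m, x n = x m

/-- The Pixley–Roy hyperspace: nonempty finite subsets of `X`. -/
def PR (X : Type*) : Type _ := {F : Set X // F.Finite ∧ F.Nonempty}

/-- The basic sets `[F, U]` of the Pixley–Roy topology. -/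
def PRBasic {X : Type*} (F U : Set X) : Set (PR X) :=
  {G : PR X | F ⊆ G.1 ∧ G.1 ⊆ U}

instance PR.instTopologicalSpace {X : Type*} [TopologicalSpace X] :
    TopologicalSpace (PR X) :=
  TopologicalSpace.generateFrom
    {S | ∃ (F : PR X) (U : Set X), IsOpen U ∧ S = PRBasic F.1 U}

/-- P-space: countable intersections of open sets are open. -/
def PSpace (X : Type*) [TopologicalSpace X] : Prop :=
  ∀ U : ℕ → Set X, (∀ n, IsOpen (U n)) → IsOpen (⋂ n, U n)

/-- `Σ(Y, p, κ)`: points of `Y^κ` differing from the constant `p` on countably many coordinates. -/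
def SigmaProd (Y : Type*) (p : Y) (κ : Type*) : Set (κ → Y) :=
  {x | {α : κ | x α ≠ p}.Countable}

/-- `σ(Y, p, κ)`: points of `Y^κ` differing from the constant `p` on finitely many coordinates. -/
def SmallSigmaProd (Y : Type*) (p : Y) (κ : Type*) : Set (κ → Y) :=
  {x | {α : κ | x α ≠ p}.Finite}

theorem statement10 {κ : Type*} [Uncountable κ] (p : Bool) :
    OHD ↥(SigmaProd Bool p κ) ∧ ¬ WSHD ↥(SigmaProd Bool p κ) := by
  classical
  constructor
  · -- OHD
    rintro ⟨U, x, hopen, hne, hconv⟩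
    choose z hz using hne
    -- each U n is induced from an open set of the product
    have hO : ∀ n, ∃ O : Set (κ → Bool), IsOpen O ∧ U n = Subtype.val ⁻¹' O := by
      intro n
      exact isOpen_induced_iff.mp (hopen n) |>.imp fun O ⟨h1, h2⟩ => ⟨h1, h2.symm⟩
    choose O hOopen hOeq using hO
    -- basic nbhd of z n inside O n
    have hzO : ∀ n, (z n : κ → Bool) ∈ O n := by
      intro n; have := hz n; rw [hOeq n] at this; exact this
    have hbasic : ∀ n, ∃ (I : Finset κ) (u : κ → Set Bool),
        (∀ a ∈ I, IsOpen (u a) ∧ (z n : κ → Bool) a ∈ u a) ∧ (I : Set κ).pi u ⊆ O n := by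
      intro n
      exact (isOpen_pi_iff.mp (hOopen n)) _ (hzO n)
    choose I u hu hsub using hbasic
    set C : Set κ := {α | (x : κ → Bool) α ≠ p} ∪ ⋃ n, (I n : Set κ) with hC
    have hCc : C.Countable := by
      refine Set.Countable.union x.2 (Set.countable_iUnion fun n => (I n).countable_toSet)
    have : ∃ α, α ∉ C := by
      by_contra h
      push_neg at h
      have : (Set.univ : Set κ).Countable := Set.eq_univ_of_forall h ▸ hCc
      exact ‹Uncountable κ›.not_countable (Set.countable_univ_iff.mp this)
    obtain ⟨α, hα⟩ := this
    have hαx : (x : κ → Bool) α = p := by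
      by_contra h; exact hα (Or.inl h)
    have hαI : ∀ n, α ∉ (I n : Set κ) := fun n h => hα (Or.inr (Set.mem_iUnion.mpr ⟨n, h⟩))
    -- V : points whose α-coordinate is p
    set V : Set ↥(SigmaProd Bool p κ) := {w | (w : κ → Bool) α = p} with hV
    have hVopen : IsOpen V := by
      have : V = Subtype.val ⁻¹' ((fun f : κ → Bool => f α) ⁻¹' {p}) := rfl
      rw [this]
      exact ((continuous_apply α).comp continuous_subtype_val).isOpen_preimage _ (isOpen_discrete _)
    obtain ⟨m, hm⟩ := hconv V hVopen hαx
    -- build a point of U m with α-coordinate ≠ p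
    set w : κ → Bool := Function.update (z m : κ → Bool) α (!p) with hw
    have hwmem : w ∈ SigmaProd Bool p κ := by
      have : {β : κ | w β ≠ p} ⊆ insert α {β : κ | (z m : κ → Bool) β ≠ p} := by
        intro β hβ
        by_cases hβα : β = α
        · exact Or.inl hβα
        · right; simpa [hw, Function.update_of_ne hβα] using hβ
      exact Set.Countable.mono this ((z m).2.insert α)
    have hwO : w ∈ O m := by
      apply hsub m
      intro a ha
      have hne : a ≠ α := fun h => hαI m (h ▸ ha)
      rw [hw]
      simp only [Function.update_of_ne hne]
      exact (hu m a ha).2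
    have hwU : (⟨w, hwmem⟩ : ↥(SigmaProd Bool p κ)) ∈ U m := by
      rw [hOeq m]; exact hwO
    have h2 := hm m le_rfl hwU
    simp only [hV, Set.mem_setOf_eq, hw, Function.update_self] at h2
    exact (Bool.not_ne_self p) h2
  · -- not WSHD
    intro hW
    obtain ⟨A, hAinf, x, -, hdiv⟩ := hW (fun _ => Set.univ) (fun _ => isOpen_univ)
      (fun _ => ⟨⟨fun _ => p, by simp [SigmaProd]⟩, Set.mem_univ _⟩)
    haveI : Infinite ↥A := hAinf.to_subtype
    set e := Nat.orderEmbeddingOfSet A with he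
    have heA : ∀ n, e n ∈ A := fun n => by
      have := Nat.orderEmbeddingOfSet_range A
      exact this ▸ ⟨n, rfl⟩
    set z : ℕ → ↥(SigmaProd Bool p κ) := fun n => x (e n) with hzdef
    set C : Set κ := ⋃ n, {α | (z n : κ → Bool) α ≠ p} with hC
    have hCc : C.Countable := Set.countable_iUnion fun n => (z n).2
    haveI : Countable ↥C := hCc.to_subtype
    -- restrict to coordinates in C
    set f : ℕ → (↥C → Bool) := fun n c => (z n : κ → Bool) c with hf
    obtain ⟨g, φ, hφ, hfg⟩ := SeqCompactSpace.tendsto_subseq f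
    -- the limit point
    set y : κ → Bool := fun α => if h : α ∈ C then g ⟨α, h⟩ else p with hy
    have hymem : y ∈ SigmaProd Bool p κ := by
      apply Set.Countable.mono _ hCc
      intro α hα
      by_contra h
      exact hα (by simp [hy, h])
    -- convergence in the product
    have hconv : Tendsto (fun n => ((z (φ n)) : κ → Bool)) atTop (𝓝 y) := by
      rw [tendsto_pi_nhds]
      intro α
      by_cases h : α ∈ C
      · have := (tendsto_pi_nhds.mp hfg) ⟨α, h⟩
        have hyα : y α = g ⟨α, h⟩ := by simp [hy, h]
        rw [hyα]
        exact this
      · have hz0 : ∀ n, ((z (φ n)) : κ → Bool) α = p := by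
          intro n
          by_contra hc
          exact h (Set.mem_iUnion.mpr ⟨φ n, hc⟩)
        have hyα : y α = p := by simp [hy, h]
        simp only [hz0, hyα]
        exact tendsto_const_nhds
    have hconv' : Tendsto (fun n => z (φ n)) atTop (𝓝 (⟨y, hymem⟩ : ↥(SigmaProd Bool p κ))) := by
      rw [tendsto_subtype_rng]
      exact hconv
    exact hdiv (fun n => e (φ n)) (fun a b hab => e.strictMono (hφ hab)) (fun n => heA _)
      ⟨y, hymem⟩ hconv'
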